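/- The generating function of planted plane trees R(g) = (1 - √(1-4g))/(2g) satisfies R(g) = 1 + g·R(g)² for 0 < g ≤ 1/4, and with g = (1/4)(1 - a²ε²/4), one has g·R(g)² = 1 - aε + O(ε²) as ε → 0⁺, so that the tree two-point function F_tree(s,g,h) = (g·R(g)²)^s·(h·R(h)²)^s with s = ⌊S/ε⌋, h = (1/4)(1 - b²ε²/4) converges to e^{-(a+b)S} as ε → 0⁺. -/

import Mathlib

open Real Filter Asymptotics

lemma aux_gR_eq (c : ℝ) (R : ℝ → ℝ)
    (hRdef : ∀ g : ℝ, R g = (1 - Real.sqrt (1 - 4 * g)) / (2 * g))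
    (ε : ℝ) (hε : 0 < ε) (hε2 : c * ε < 2) (hc : 0 < c) :
    (1 / 4 * (1 - c ^ 2 * ε ^ 2 / 4)) * R (1 / 4 * (1 - c ^ 2 * ε ^ 2 / 4)) ^ 2
      = (1 - c * ε / 2) / (1 + c * ε / 2) := by
  have h1 : 1 - 4 * (1 / 4 * (1 - c ^ 2 * ε ^ 2 / 4)) = (c * ε / 2) ^ 2 := by ring
  have hsqrt : Real.sqrt (1 - 4 * (1 / 4 * (1 - c ^ 2 * ε ^ 2 / 4))) = c * ε / 2 := by
    rw [h1, Real.sqrt_sq (by positivity)]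
  have hce : 0 < c * ε := mul_pos hc hε
  have hg : (0:ℝ) < 1 / 4 * (1 - c ^ 2 * ε ^ 2 / 4) := by nlinarith
  have h2 : (0:ℝ) < 1 + c * ε / 2 := by positivity
  have hR : (1 - c * ε / 2) / (2 * (1 / 4 * (1 - c ^ 2 * ε ^ 2 / 4)))
      = 2 / (1 + c * ε / 2) := by
    rw [div_eq_div_iff (by positivity) h2.ne']
    ring
  rw [hRdef, hsqrt, hR, div_pow, mul_div_assoc',
    div_eq_div_iff (by positivity) h2.ne']
  ring

lemma aux_floor_mul (S : ℝ) (hS : 0 < S) :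
    Tendsto (fun ε : ℝ => (⌊S / ε⌋₊ : ℝ) * ε) (nhdsWithin 0 (Set.Ioi 0)) (nhds S) := by
  have h1 : Tendsto (fun ε : ℝ => S - ε) (nhdsWithin 0 (Set.Ioi 0)) (nhds S) := by
    have : Tendsto (fun ε : ℝ => S - ε) (nhds 0) (nhds (S - 0)) :=
      tendsto_const_nhds.sub tendsto_id
    simpa using this.mono_left nhdsWithin_le_nhds
  refine tendsto_of_tendsto_of_tendsto_of_le_of_le' h1 tendsto_const_nhds ?_ ?_
  · filter_upwards [self_mem_nhdsWithin] with ε (hε : 0 < ε)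
    have h2 : S / ε < (⌊S / ε⌋₊ : ℝ) + 1 := Nat.lt_floor_add_one _
    have h3 := (div_lt_iff₀ hε).mp h2
    nlinarith
  · filter_upwards [self_mem_nhdsWithin] with ε (hε : 0 < ε)
    have h2 : (⌊S / ε⌋₊ : ℝ) ≤ S / ε := Nat.floor_le (by positivity)
    calc (⌊S / ε⌋₊ : ℝ) * ε ≤ (S / ε) * ε := by nlinarith
    _ = S := by field_simp

lemma aux_log_slope (c : ℝ) :
    Tendsto (fun ε : ℝ => (Real.log (1 - c * ε / 2) - Real.log (1 + c * ε / 2)) / ε)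
      (nhdsWithin 0 (Set.Ioi 0)) (nhds (-c)) := by
  have hd : HasDerivAt (fun x : ℝ => Real.log (1 - c * x / 2) - Real.log (1 + c * x / 2)) (-c) 0 := by
    have h1 : HasDerivAt (fun x : ℝ => 1 - c * x / 2) (-(c / 2)) 0 := by
      simpa using (((hasDerivAt_id (0:ℝ)).const_mul c).div_const 2).const_sub 1
    have h2 : HasDerivAt (fun x : ℝ => 1 + c * x / 2) (c / 2) 0 := by
      simpa using (((hasDerivAt_id (0:ℝ)).const_mul c).div_const 2).const_add 1
    have l1 := h1.log (by norm_num)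
    have l2 := h2.log (by norm_num)
    have := l1.sub l2
    exact this.congr_deriv (by ring)
  have hslope := hasDerivAt_iff_tendsto_slope.mp hd
  have h := hslope.mono_left (nhdsWithin_mono _ (fun x hx => by
    simp only [Set.mem_compl_iff, Set.mem_singleton_iff]
    exact ne_of_gt hx))
  refine h.congr' ?_
  filter_upwards [self_mem_nhdsWithin] with ε (hε : 0 < ε)
  rw [slope_def_field]
  simp
lemma aux_part2_bound (c : ℝ) (hc : 0 < c) (ε : ℝ) (hε0 : 0 < ε) (hε2 : c * ε < 2) :
    (1 - c * ε / 2) / (1 + c * ε / 2) - (1 - c * ε)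
      = (c ^ 2 * ε ^ 2 / 2) / (1 + c * ε / 2) := by
  have h2 : (0:ℝ) < 1 + c * ε / 2 := by positivity
  field_simp
  ring

lemma aux_exp_pow (S c ε : ℝ) (hc : 0 < c) (hε0 : 0 < ε) (hcε : c * ε < 2) :
    Real.exp ((⌊S / ε⌋₊ : ℝ) * ε *
        ((Real.log (1 - c * ε / 2) - Real.log (1 + c * ε / 2)) / ε))
      = ((1 - c * ε / 2) / (1 + c * ε / 2)) ^ ⌊S / ε⌋₊ := by
  have p1 : (0:ℝ) < 1 - c * ε / 2 := by linarith
  have p2 : (0:ℝ) < 1 + c * ε / 2 := by positivity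
  have h : (⌊S / ε⌋₊ : ℝ) * ε *
        ((Real.log (1 - c * ε / 2) - Real.log (1 + c * ε / 2)) / ε)
      = (⌊S / ε⌋₊ : ℝ) * Real.log ((1 - c * ε / 2) / (1 + c * ε / 2)) := by
    rw [Real.log_div p1.ne' p2.ne']
    field_simp
  rw [h, Real.exp_nat_mul, Real.exp_log (by positivity)]

theorem stmt_14 (a b S : ℝ) (ha : 0 < a) (hb : 0 < b) (hS : 0 < S)
    (R : ℝ → ℝ) (hRdef : ∀ g : ℝ, R g = (1 - Real.sqrt (1 - 4 * g)) / (2 * g)) :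
    (∀ g ∈ Set.Ioc (0 : ℝ) (1 / 4), R g = 1 + g * R g ^ 2) ∧
    ((fun ε : ℝ =>
        (1 / 4 * (1 - a ^ 2 * ε ^ 2 / 4)) * R (1 / 4 * (1 - a ^ 2 * ε ^ 2 / 4)) ^ 2
          - (1 - a * ε))
      =O[nhdsWithin 0 (Set.Ioi 0)] fun ε : ℝ => ε ^ 2) ∧
    Tendsto (fun ε : ℝ =>
        ((1 / 4 * (1 - a ^ 2 * ε ^ 2 / 4)) *
            R (1 / 4 * (1 - a ^ 2 * ε ^ 2 / 4)) ^ 2) ^ (⌊S / ε⌋₊) *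
        ((1 / 4 * (1 - b ^ 2 * ε ^ 2 / 4)) *
            R (1 / 4 * (1 - b ^ 2 * ε ^ 2 / 4)) ^ 2) ^ (⌊S / ε⌋₊))
      (nhdsWithin 0 (Set.Ioi 0)) (nhds (Real.exp (-(a + b) * S))) := by
  refine ⟨?_, ?_, ?_⟩
  · rintro g ⟨hg0, hg14⟩
    have hnn : (0:ℝ) ≤ 1 - 4 * g := by linarith
    have hs2 : Real.sqrt (1 - 4 * g) ^ 2 = 1 - 4 * g := Real.sq_sqrt hnn
    rw [hRdef]
    have hgne : g ≠ 0 := ne_of_gt hg0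
    field_simp
    nlinarith [hs2]
  · have hmem : Set.Ioo (0:ℝ) (2 / a) ∈ nhdsWithin 0 (Set.Ioi 0) :=
      Ioo_mem_nhdsGT_of_mem ⟨le_refl 0, by positivity⟩
    refine IsBigO.of_bound (a ^ 2 / 2) ?_
    filter_upwards [hmem] with ε hε
    obtain ⟨hε0, hεa⟩ := hε
    have hεa2 : a * ε < 2 := by
      rw [lt_div_iff₀ ha] at hεa; linarith [hεa]
    rw [aux_gR_eq a R hRdef ε hε0 hεa2 ha, aux_part2_bound a ha ε hε0 hεa2]
    have h2 : (0:ℝ) < 1 + a * ε / 2 := by positivity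
    have h1le : (1:ℝ) ≤ 1 + a * ε / 2 := by nlinarith
    rw [Real.norm_eq_abs, Real.norm_eq_abs,
      abs_of_nonneg (by positivity), abs_of_nonneg (by positivity),
      div_le_iff₀ h2]
    nlinarith [mul_nonneg (mul_nonneg (sq_nonneg a) (sq_nonneg ε)) (le_of_lt (mul_pos ha hε0))]
  · have hA := (aux_floor_mul S hS).mul (aux_log_slope a)
    have hB := (aux_floor_mul S hS).mul (aux_log_slope b)
    have hexp := (Real.continuous_exp.tendsto (S * -a + S * -b)).comp (hA.add hB)
    have heq : Real.exp (-(a + b) * S) = Real.exp (S * -a + S * -b) := by ring_nf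
    rw [heq]
    refine Tendsto.congr' ?_ hexp
    have hmem : Set.Ioo (0:ℝ) (min (2 / a) (2 / b)) ∈ nhdsWithin 0 (Set.Ioi 0) :=
      Ioo_mem_nhdsGT_of_mem ⟨le_refl 0, by positivity⟩
    filter_upwards [hmem] with ε hε
    obtain ⟨hε0, hεm⟩ := hε
    have hεa : a * ε < 2 := by
      have h := lt_of_lt_of_le hεm (min_le_left _ _)
      rw [lt_div_iff₀ ha] at h; linarith [h]
    have hεb : b * ε < 2 := by
      have h := lt_of_lt_of_le hεm (min_le_right _ _)
      rw [lt_div_iff₀ hb] at h; linarith [h]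
    simp only [Function.comp_apply]
    rw [Real.exp_add, aux_exp_pow S a ε ha hε0 hεa, aux_exp_pow S b ε hb hε0 hεb,
      aux_gR_eq a R hRdef ε hε0 hεa ha, aux_gR_eq b R hRdef ε hε0 hεb hb]
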